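/- arXiv:1909.04646 — 3 statements merged into one kernel-verified Lean document; each statement's English description precedes it below -/
import Mathlib

section
/- Let η be a nondegenerate symmetric bilinear form on V and J an endomorphism with J² = -id and η(Jx,Jy) = -η(x,y) for all x,y. Then H(x,y) := η(Jx,y) is a symmetric nondegenerate bilinear form, and moreover η has split signature (n,n) where dim V = 2n. -/
open Module Submodule

private lemma aux_expand {V : Type*} [AddCommGroup V] [Module ℝ V] {ι : Type*} [Fintype ι]
    [DecidableEq ι]
    (B : V →ₗ[ℝ] V →ₗ[ℝ] ℝ) (v : Basis ι ℝ V) (hv : ∀ i j, i ≠ j → B (v i) (v j) = 0)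
    (x : V) : B x x = ∑ i, (v.repr x i)^2 * B (v i) (v i) := by
  conv_lhs => rw [← v.sum_repr x]
  rw [map_sum]
  refine Finset.sum_congr rfl fun i _ => ?_
  rw [map_smul, smul_eq_mul, map_sum, LinearMap.sum_apply, Finset.sum_eq_single i]
  · rw [map_smul, LinearMap.smul_apply, smul_eq_mul]; ring
  · intro j _ hj
    rw [map_smul, LinearMap.smul_apply, smul_eq_mul, hv j i hj, mul_zero]
  · simp

private lemma aux_pos {V : Type*} [AddCommGroup V] [Module ℝ V] {ι : Type*} [Fintype ι]
    [DecidableEq ι]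
    (B : V →ₗ[ℝ] V →ₗ[ℝ] ℝ) (v : Basis ι ℝ V) (hv : ∀ i j, i ≠ j → B (v i) (v j) = 0)
    (u : Finset ι) (hu : ∀ i ∈ u, 0 < B (v i) (v i))
    (x : V) (hx : x ∈ Submodule.span ℝ (v '' ↑u)) (hx0 : x ≠ 0) : 0 < B x x := by
  have hsupp : ↑(v.repr x).support ⊆ (↑u : Set ι) := (Basis.mem_span_image v).1 hx
  rw [aux_expand B v hv x]
  have hnonneg : ∀ i ∈ Finset.univ, 0 ≤ (v.repr x i)^2 * B (v i) (v i) := by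
    intro i _
    by_cases h : v.repr x i = 0
    · simp [h]
    · exact mul_nonneg (sq_nonneg _) (le_of_lt (hu i (hsupp (Finsupp.mem_support_iff.2 h))))
  obtain ⟨i, hi⟩ : ∃ i, v.repr x i ≠ 0 := by
    by_contra h
    push_neg at h
    exact hx0 (v.repr.map_eq_zero_iff.1 (Finsupp.ext h))
  exact Finset.sum_pos' hnonneg
    ⟨i, Finset.mem_univ i, mul_pos (by positivity) (hu i (hsupp (Finsupp.mem_support_iff.2 hi)))⟩

/-- for an almost anti-Hermitian (Norden) structure `(η, J)`,
`H(x,y) = η(Jx,y)` is a symmetric nondegenerate bilinear form, and `η` has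
split signature `(n,n)` with `dim V = 2n` (formalized by the existence of a
totally isotropic subspace of dimension `n`). -/
theorem stmt7 {V : Type*} [AddCommGroup V] [Module ℝ V] [FiniteDimensional ℝ V]
    (η : V →ₗ[ℝ] V →ₗ[ℝ] ℝ)
    (hsymm : ∀ x y, η x y = η y x)
    (hnd : ∀ x, (∀ y, η x y = 0) → x = 0)
    (J : Module.End ℝ V)
    (hJ2 : ∀ x, J (J x) = -x)
    (hJη : ∀ x y, η (J x) (J y) = - η x y) :
    (∀ x y, η (J x) y = η (J y) x) ∧
    (∀ x, (∀ y, η (J x) y = 0) → x = 0) ∧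
    (∃ n : ℕ, Module.finrank ℝ V = 2 * n ∧
      ∃ W : Submodule ℝ V, Module.finrank ℝ W = n ∧
        ∀ x ∈ W, ∀ y ∈ W, η x y = 0) := by
  classical
  have hJinj : Function.Injective J := by
    intro a b hab
    have h := congrArg J hab
    rw [hJ2, hJ2] at h
    exact neg_injective h
  have h1 : ∀ x y, η (J x) y = η (J y) x := by
    intro x y
    have h := hJη x (J y)
    rw [hJ2] at h
    rw [map_neg] at h
    have : η (J x) y = η x (J y) := by linarith
    rw [this, hsymm]
  refine ⟨h1, ?_, ?_⟩
  · intro x hx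
    have hJx : J x = 0 := hnd _ hx
    have h := hJ2 x
    rw [hJx, map_zero] at h
    exact neg_eq_zero.mp h.symm
  -- main part
  obtain ⟨v, hv⟩ := LinearMap.BilinForm.exists_orthogonal_basis
    (B := η) (LinearMap.isSymm_def.2 (fun x y => hsymm x y))
  have hv' : ∀ i j, i ≠ j → η (v i) (v j) = 0 := LinearMap.isOrthoᵢ_def.1 hv
  set d : Fin (finrank ℝ V) → ℝ := fun i => η (v i) (v i) with hd
  have hdne : ∀ i, d i ≠ 0 := by
    intro i h
    have hz : η (v i) = 0 := by
      apply v.ext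
      intro j
      by_cases hij : i = j
      · subst hij; simpa using h
      · simpa using hv' i j hij
    exact v.ne_zero i (hnd (v i) (fun y => by rw [hz]; rfl))
  set s : Finset (Fin (finrank ℝ V)) := Finset.univ.filter (fun i => 0 < d i) with hs
  set t : Finset (Fin (finrank ℝ V)) := Finset.univ.filter (fun i => d i < 0) with ht
  have hds : ∀ i ∈ s, 0 < d i := fun i hi => (Finset.mem_filter.1 hi).2
  have hdt : ∀ i ∈ t, d i < 0 := fun i hi => (Finset.mem_filter.1 hi).2
  have hstdisj : Disjoint s t := by
    rw [Finset.disjoint_left]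
    intro i hi hit
    exact absurd (hds i hi) (not_lt.2 (le_of_lt (hdt i hit)))
  have hstunion : s ∪ t = Finset.univ := by
    ext i
    simp only [Finset.mem_union, Finset.mem_univ, iff_true, hs, ht, Finset.mem_filter, true_and]
    rcases lt_trichotomy (d i) 0 with h | h | h
    · exact Or.inr h
    · exact absurd h (hdne i)
    · exact Or.inl h
  have hcardsum : s.card + t.card = finrank ℝ V := by
    rw [← Finset.card_union_of_disjoint hstdisj, hstunion, Finset.card_univ, Fintype.card_fin]
  -- J as an equiv
  have hJsurj : Function.Surjective J := fun x => ⟨-(J x), by rw [map_neg, hJ2, neg_neg]⟩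
  let Je : V ≃ₗ[ℝ] V := LinearEquiv.ofBijective J ⟨hJinj, hJsurj⟩
  -- positive and negative spans
  set Vp : Submodule ℝ V := Submodule.span ℝ (v '' ↑s) with hVp
  set Vm : Submodule ℝ V := Submodule.span ℝ (v '' ↑t) with hVm
  have hposVp : ∀ x ∈ Vp, x ≠ 0 → 0 < η x x := fun x hx hx0 => aux_pos η v hv' s hds x hx hx0
  have hnegVm : ∀ x ∈ Vm, x ≠ 0 → η x x < 0 := by
    intro x hx hx0
    have := aux_pos (-η) v (fun i j hij => by simp [hv' i j hij]) t
      (fun i hi => by simpa using hdt i hi) x hx hx0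
    simpa using this
  -- finrank of spans
  have hfin : ∀ u : Finset (Fin (finrank ℝ V)),
      finrank ℝ (Submodule.span ℝ (v '' ↑u)) = u.card := by
    intro u
    have himg : ⇑v '' ↑u = Set.range (fun i : ↥u => v ↑i) := by
      ext z
      simp [Set.mem_image, Set.mem_range]
    rw [himg]
    have hind : LinearIndependent ℝ (fun i : ↥u => v ↑i) :=
      v.linearIndependent.comp _ Subtype.val_injective
    rw [finrank_span_eq_card hind, Fintype.card_coe]
  -- intersection with J image trivial
  have hkey : ∀ u : Finset (Fin (finrank ℝ V)), (∀ x ∈ Submodule.span ℝ (v '' ↑u), x ≠ 0 → η x x ≠ 0) →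
      (∀ x ∈ Submodule.span ℝ (v '' ↑u), x ≠ 0 →
        ∀ y ∈ Submodule.span ℝ (v '' ↑u), x = J y → False) →
      u.card + u.card ≤ finrank ℝ V := by
    intro u h0 hJim
    set U : Submodule ℝ V := Submodule.span ℝ (v '' ↑u) with hU
    have hinf : U ⊓ Submodule.map J U = ⊥ := by
      rw [eq_bot_iff]
      intro z hz
      rw [Submodule.mem_inf] at hz
      obtain ⟨hz1, hz2⟩ := hz
      obtain ⟨y, hy, rfl⟩ := hz2
      rw [Submodule.mem_bot]
      by_contra hz0
      exact hJim (J y) hz1 hz0 y hy rfl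
    have hsum := Submodule.finrank_sup_add_finrank_inf_eq U (Submodule.map J U)
    rw [hinf, finrank_bot, add_zero] at hsum
    have hmap : finrank ℝ (Submodule.map J U) = finrank ℝ U := by
      have : Submodule.map J U = Submodule.map (Je : V →ₗ[ℝ] V) U := rfl
      rw [this, LinearEquiv.finrank_map_eq]
    have hle : finrank ℝ ↥(U ⊔ Submodule.map J U) ≤ finrank ℝ V := Submodule.finrank_le _
    rw [hsum, hmap, hfin u] at hle
    exact hle
  have hst : s.card = t.card := by
    have h1le : s.card + s.card ≤ finrank ℝ V := by
      apply hkey s (fun x hx hx0 => ne_of_gt (hposVp x hx hx0))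
      intro x hx hx0 y hy hxy
      have hy0 : y ≠ 0 := by rintro rfl; rw [map_zero] at hxy; exact hx0 hxy
      have h1 : 0 < η x x := hposVp x hx hx0
      have h2 : 0 < η y y := hposVp y hy hy0
      rw [hxy, hJη] at h1
      linarith
    have h2le : t.card + t.card ≤ finrank ℝ V := by
      apply hkey t (fun x hx hx0 => ne_of_lt (hnegVm x hx hx0))
      intro x hx hx0 y hy hxy
      have hy0 : y ≠ 0 := by rintro rfl; rw [map_zero] at hxy; exact hx0 hxy
      have h1 : η x x < 0 := hnegVm x hx hx0
      have h2 : η y y < 0 := hnegVm y hy hy0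
      rw [hxy, hJη] at h1
      linarith
    omega
  refine ⟨s.card, by omega, ?_⟩
  -- construct the isotropic subspace
  let σ : ↥s ≃ ↥t := Finset.equivOfCardEq hst
  have hσt : ∀ i : ↥s, d ↑(σ i) < 0 := fun i => hdt _ (σ i).2
  have hσs : ∀ i : ↥s, 0 < d ↑i := fun i => hds _ i.2
  have hne1 : ∀ (i j : ↥s), (↑i : Fin (finrank ℝ V)) ≠ ↑(σ j) := by
    intro i j h
    have := hσs i
    rw [h] at this
    exact absurd this (not_lt.2 (le_of_lt (hσt j)))
  let w : ↥s → V := fun i => Real.sqrt (-(d ↑(σ i))) • v ↑i + Real.sqrt (d ↑i) • v ↑(σ i)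
  have horth : ∀ i j : ↥s, η (w i) (w j) = 0 := by
    intro i j
    show η (Real.sqrt (-(d ↑(σ i))) • v ↑i + Real.sqrt (d ↑i) • v ↑(σ i))
      (Real.sqrt (-(d ↑(σ j))) • v ↑j + Real.sqrt (d ↑j) • v ↑(σ j)) = 0
    simp only [map_add, map_smul, LinearMap.add_apply, LinearMap.smul_apply, smul_eq_mul]
    rw [hv' _ _ (hne1 i j), hv' _ _ (fun h => hne1 j i h.symm)]
    rcases eq_or_ne i j with rfl | hij
    · rw [show η (v ↑i) (v ↑i) = d ↑i from rfl, show η (v ↑(σ i)) (v ↑(σ i)) = d ↑(σ i) from rfl]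
      have e1 : Real.sqrt (-(d ↑(σ i))) * Real.sqrt (-(d ↑(σ i))) = -(d ↑(σ i)) :=
        Real.mul_self_sqrt (le_of_lt (neg_pos.2 (hσt i)))
      have e2 : Real.sqrt (d ↑i) * Real.sqrt (d ↑i) = d ↑i :=
        Real.mul_self_sqrt (le_of_lt (hσs i))
      linear_combination (d ↑i) * e1 + (d ↑(σ i)) * e2
    · have h1 : (↑i : Fin (finrank ℝ V)) ≠ ↑j := fun h => hij (Subtype.ext h)
      have h2 : (↑(σ i) : Fin (finrank ℝ V)) ≠ ↑(σ j) := fun h => hij (σ.injective (Subtype.ext h))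
      rw [hv' _ _ h1, hv' _ _ h2]
      ring
  have hli : LinearIndependent ℝ w := by
    rw [Fintype.linearIndependent_iff]
    intro c hc i
    have h := congrArg (v.coord ↑i) hc
    rw [map_sum, map_zero] at h
    have hterm : ∀ j : ↥s, v.coord ↑i (c j • w j) = if j = i then c i * Real.sqrt (-(d ↑(σ i))) else 0 := by
      intro j
      rw [map_smul, smul_eq_mul]
      show c j * v.coord ↑i (Real.sqrt (-(d ↑(σ j))) • v ↑j + Real.sqrt (d ↑j) • v ↑(σ j)) = _
      rw [map_add, map_smul, map_smul, smul_eq_mul, smul_eq_mul, Basis.coord_apply,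
        Basis.coord_apply, Basis.repr_self_apply, Basis.repr_self_apply]
      rw [if_neg (hne1 i j).symm]  -- (σ j) = i? condition is ↑(σ j) = ↑i
      rcases eq_or_ne j i with rfl | hji
      · rw [if_pos rfl, if_pos rfl]; ring
      · rw [if_neg (fun h => hji (Subtype.ext h)), if_neg hji]; ring
    rw [Finset.sum_congr rfl (fun j _ => hterm j), Finset.sum_ite_eq' Finset.univ i
      (fun _ => c i * Real.sqrt (-(d ↑(σ i)))), if_pos (Finset.mem_univ i)] at h
    have hsq : Real.sqrt (-(d ↑(σ i))) ≠ 0 :=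
      ne_of_gt (Real.sqrt_pos.2 (neg_pos.2 (hσt i)))
    exact (mul_eq_zero.1 h).resolve_right hsq
  refine ⟨Submodule.span ℝ (Set.range w), ?_, ?_⟩
  · rw [finrank_span_eq_card hli, Fintype.card_coe]
  · intro x hx y hy
    have hxgen : ∀ j : ↥s, η x (w j) = 0 := by
      intro j
      have hle : Submodule.span ℝ (Set.range w) ≤ LinearMap.ker (η.flip (w j)) := by
        rw [Submodule.span_le]
        rintro _ ⟨i, rfl⟩
        simpa [LinearMap.mem_ker, LinearMap.flip_apply] using horth i j
      simpa [LinearMap.mem_ker, LinearMap.flip_apply] using hle hx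
    have hle : Submodule.span ℝ (Set.range w) ≤ LinearMap.ker (η x) := by
      rw [Submodule.span_le]
      rintro _ ⟨j, rfl⟩
      simpa [LinearMap.mem_ker] using hxgen j
    simpa [LinearMap.mem_ker] using hle hy
end

section
/- Given a Born structure presented as a para-Hermitian pair (η, K) with K = η⁻¹ω together with a metric H satisfying η⁻¹H = H⁻¹η and ω⁻¹H = -H⁻¹ω, the endomorphisms J := η⁻¹H and K := η⁻¹ω satisfy J² = id, K² = id, JK + KJ = 0, and I := JK satisfies I² = -id. -/
/-!
Write `J = η⁻¹H` and `K = η⁻¹ω`. For isomorphisms `e f : M ≃ N`, the endomorphism `e⁻¹f` is an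
involution exactly when it equals its inverse `f⁻¹e`; hence `J² = id`, and `K² = id` gives
`η⁻¹ω = ω⁻¹η`. The same rewriting collapses `JK = H⁻¹ω` and `KJ = ω⁻¹H = -H⁻¹ω`, so `J` and `K`
anticommute, and then `(JK)² = -J²K² = -id`.
-/

theorem mul_mul_self_eq_neg_one_of_anticommute {A : Type*} [Ring A] {a b : A}
    (ha : a * a = 1) (hb : b * b = 1) (hab : a * b + b * a = 0) :
    (a * b) * (a * b) = -1 := by
  have hba : b * a = -(a * b) := eq_neg_of_add_eq_zero_right hab
  calc (a * b) * (a * b) = a * (b * a) * b := by simp only [mul_assoc]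
    _ = -((a * a) * (b * b)) := by rw [hba]; noncomm_ring
    _ = -1 := by rw [ha, hb, one_mul]

namespace LinearEquiv

variable {R M N : Type*} [Semiring R] [AddCommMonoid M] [AddCommMonoid N]
  [Module R M] [Module R N]

theorem symm_comp_comp_symm_comp {e f : M ≃ₗ[R] N} (g : M ≃ₗ[R] N)
    (h : e.symm.toLinearMap ∘ₗ f.toLinearMap = f.symm.toLinearMap ∘ₗ e.toLinearMap) :
    (e.symm.toLinearMap ∘ₗ f.toLinearMap) ∘ₗ (e.symm.toLinearMap ∘ₗ g.toLinearMap)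
      = f.symm.toLinearMap ∘ₗ g.toLinearMap := by
  rw [h, LinearMap.comp_assoc, ← LinearMap.comp_assoc g.toLinearMap, comp_symm,
    LinearMap.id_comp]

theorem symm_comp_involutive_iff (e f : M ≃ₗ[R] N) :
    (e.symm.toLinearMap ∘ₗ f.toLinearMap) ∘ₗ (e.symm.toLinearMap ∘ₗ f.toLinearMap)
        = LinearMap.id ↔
      e.symm.toLinearMap ∘ₗ f.toLinearMap = f.symm.toLinearMap ∘ₗ e.toLinearMap := by
  refine ⟨fun h => ?_, fun h => by rw [symm_comp_comp_symm_comp f h, symm_comp]⟩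
  ext x
  simpa using LinearMap.congr_fun h (f.symm (e x))

end LinearEquiv

theorem stmt11_general {V : Type*} [AddCommGroup V] [Module ℝ V]
    (η H : V ≃ₗ[ℝ] Module.Dual ℝ V)
    (ω : V ≃ₗ[ℝ] Module.Dual ℝ V)
    -- para-Hermitian compatibility: (η⁻¹ω)² = id
    (hK2 : (η.symm.toLinearMap ∘ₗ ω.toLinearMap) ∘ₗ
        (η.symm.toLinearMap ∘ₗ ω.toLinearMap) = LinearMap.id)
    -- η⁻¹H = H⁻¹η
    (hJ : η.symm.toLinearMap ∘ₗ H.toLinearMap = H.symm.toLinearMap ∘ₗ η.toLinearMap)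
    -- ω⁻¹H = -H⁻¹ω
    (hIK : ω.symm.toLinearMap ∘ₗ H.toLinearMap
        = - (H.symm.toLinearMap ∘ₗ ω.toLinearMap)) :
    (η.symm.toLinearMap ∘ₗ H.toLinearMap) ∘ₗ (η.symm.toLinearMap ∘ₗ H.toLinearMap)
        = LinearMap.id ∧
    (η.symm.toLinearMap ∘ₗ ω.toLinearMap) ∘ₗ (η.symm.toLinearMap ∘ₗ ω.toLinearMap)
        = LinearMap.id ∧
    (η.symm.toLinearMap ∘ₗ H.toLinearMap) ∘ₗ (η.symm.toLinearMap ∘ₗ ω.toLinearMap)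
      + (η.symm.toLinearMap ∘ₗ ω.toLinearMap) ∘ₗ (η.symm.toLinearMap ∘ₗ H.toLinearMap)
        = 0 ∧
    ((η.symm.toLinearMap ∘ₗ H.toLinearMap) ∘ₗ (η.symm.toLinearMap ∘ₗ ω.toLinearMap)) ∘ₗ
      ((η.symm.toLinearMap ∘ₗ H.toLinearMap) ∘ₗ (η.symm.toLinearMap ∘ₗ ω.toLinearMap))
        = - LinearMap.id := by
  have hJ2 := (LinearEquiv.symm_comp_involutive_iff η H).2 hJ
  have hK := (LinearEquiv.symm_comp_involutive_iff η ω).1 hK2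
  have hJK : (η.symm.toLinearMap ∘ₗ H.toLinearMap) ∘ₗ (η.symm.toLinearMap ∘ₗ ω.toLinearMap)
      + (η.symm.toLinearMap ∘ₗ ω.toLinearMap) ∘ₗ (η.symm.toLinearMap ∘ₗ H.toLinearMap) = 0 := by
    rw [LinearEquiv.symm_comp_comp_symm_comp ω hJ, LinearEquiv.symm_comp_comp_symm_comp H hK,
      hIK, add_neg_cancel]
  exact ⟨hJ2, hK2, hJK, mul_mul_self_eq_neg_one_of_anticommute (A := Module.End ℝ V) hJ2 hK2 hJK⟩

/-- a Born structure given by a para-Hermitian pair `(η, ω)` and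
a compatible metric `H` yields endomorphisms `J = η⁻¹H`, `K = η⁻¹ω` with
`J² = id`, `K² = id`, `JK + KJ = 0`, and `I = JK` with `I² = -id`. -/
theorem stmt11 {V : Type*} [AddCommGroup V] [Module ℝ V] [FiniteDimensional ℝ V]
    (η H : V ≃ₗ[ℝ] Module.Dual ℝ V)
    (ω : V ≃ₗ[ℝ] Module.Dual ℝ V)
    (hηsymm : ∀ x y, η x y = η y x)
    (hHsymm : ∀ x y, H x y = H y x)
    (hωskew : ∀ x y, ω x y = - ω y x)
    -- para-Hermitian compatibility: (η⁻¹ω)² = id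
    (hK2 : (η.symm.toLinearMap ∘ₗ ω.toLinearMap) ∘ₗ
        (η.symm.toLinearMap ∘ₗ ω.toLinearMap) = LinearMap.id)
    -- η⁻¹H = H⁻¹η
    (hJ : η.symm.toLinearMap ∘ₗ H.toLinearMap = H.symm.toLinearMap ∘ₗ η.toLinearMap)
    -- ω⁻¹H = -H⁻¹ω
    (hIK : ω.symm.toLinearMap ∘ₗ H.toLinearMap
        = - (H.symm.toLinearMap ∘ₗ ω.toLinearMap)) :
    (η.symm.toLinearMap ∘ₗ H.toLinearMap) ∘ₗ (η.symm.toLinearMap ∘ₗ H.toLinearMap)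
        = LinearMap.id ∧
    (η.symm.toLinearMap ∘ₗ ω.toLinearMap) ∘ₗ (η.symm.toLinearMap ∘ₗ ω.toLinearMap)
        = LinearMap.id ∧
    (η.symm.toLinearMap ∘ₗ H.toLinearMap) ∘ₗ (η.symm.toLinearMap ∘ₗ ω.toLinearMap)
      + (η.symm.toLinearMap ∘ₗ ω.toLinearMap) ∘ₗ (η.symm.toLinearMap ∘ₗ H.toLinearMap)
        = 0 ∧
    ((η.symm.toLinearMap ∘ₗ H.toLinearMap) ∘ₗ (η.symm.toLinearMap ∘ₗ ω.toLinearMap)) ∘ₗ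
      ((η.symm.toLinearMap ∘ₗ H.toLinearMap) ∘ₗ (η.symm.toLinearMap ∘ₗ ω.toLinearMap))
        = - LinearMap.id :=
  stmt11_general η H ω hK2 hJ hIK
end

section
/- With Q = (1/2)[K₊,K₋]η⁻¹ as above (K± para-Hermitian for the same η), Q satisfies K± Q K±* = Q; equivalently, the bivector Q is of type (2,0)+(0,2) with respect to both K₊ and K₋. -/
/-!
Since `K` is an involution that reverses the sign of `η`, transposition by `η` turns `K*` into
`-K`, i.e. `η⁻¹ ∘ K* = -K ∘ η⁻¹`. Hence `K Q K* = -(K [K₊, K₋] K) η⁻¹ / 2`, and conjugating the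
commutator of two involutions by either of them reverses its sign.
-/

section Ring

variable {A : Type*} [Ring A]

theorem mul_sub_mul_comm_mul_self_left {a : A} (ha : a * a = 1) (b : A) :
    a * (a * b - b * a) * a = -(a * b - b * a) := by
  have : a * (a * b - b * a) * a = (a * a) * b * a - a * b * (a * a) := by noncomm_ring
  rw [this, ha]
  noncomm_ring

theorem mul_sub_mul_comm_mul_self_right (a : A) {b : A} (hb : b * b = 1) :
    b * (a * b - b * a) * b = -(a * b - b * a) := by
  have : b * (a * b - b * a) * b = b * a * (b * b) - (b * b) * a * b := by noncomm_ring
  rw [this, hb]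
  noncomm_ring

end Ring

section ParaHermitian

variable {R V : Type*} [CommRing R] [AddCommGroup V] [Module R V]
  (η : V ≃ₗ[R] Module.Dual R V) {K : Module.End R V}

theorem symm_comp_dualMap_eq_neg_comp (hK2 : ∀ x, K (K x) = x)
    (hKη : ∀ x y, η (K x) (K y) = -η x y) :
    η.symm.toLinearMap ∘ₗ K.dualMap = -(K ∘ₗ η.symm.toLinearMap) := by
  ext f : 1
  apply η.injective
  ext y
  have : f (K y) = -η (K (η.symm f)) y := by
    rw [← hK2 y, hKη, hK2, LinearEquiv.apply_symm_apply, neg_neg]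
  simpa using this

theorem comp_comp_symm_comp_dualMap_eq_self (hK2 : ∀ x, K (K x) = x)
    (hKη : ∀ x y, η (K x) (K y) = -η x y) {T : Module.End R V} (hT : K * T * K = -T) :
    K ∘ₗ (T ∘ₗ η.symm.toLinearMap) ∘ₗ K.dualMap = T ∘ₗ η.symm.toLinearMap := by
  calc K ∘ₗ (T ∘ₗ η.symm.toLinearMap) ∘ₗ K.dualMap
      = K ∘ₗ T ∘ₗ (η.symm.toLinearMap ∘ₗ K.dualMap) := rfl
    _ = -((K * T * K) ∘ₗ η.symm.toLinearMap) := by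
      rw [symm_comp_dualMap_eq_neg_comp η hK2 hKη]
      simp only [LinearMap.comp_neg, Module.End.mul_eq_comp]
      rfl
    _ = T ∘ₗ η.symm.toLinearMap := by rw [hT, LinearMap.neg_comp, neg_neg]

end ParaHermitian

theorem stmt13_general {V : Type*} [AddCommGroup V] [Module ℝ V]
    (η : V ≃ₗ[ℝ] Module.Dual ℝ V)
    (Kp Km : Module.End ℝ V)
    (hKp2 : ∀ x, Kp (Kp x) = x) (hKm2 : ∀ x, Km (Km x) = x)
    (hKpη : ∀ x y, η (Kp x) (Kp y) = - η x y)
    (hKmη : ∀ x y, η (Km x) (Km y) = - η x y) :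
    Kp ∘ₗ ((1/2 : ℝ) • ((Kp ∘ₗ Km - Km ∘ₗ Kp) ∘ₗ η.symm.toLinearMap)) ∘ₗ Kp.dualMap
      = (1/2 : ℝ) • ((Kp ∘ₗ Km - Km ∘ₗ Kp) ∘ₗ η.symm.toLinearMap) ∧
    Km ∘ₗ ((1/2 : ℝ) • ((Kp ∘ₗ Km - Km ∘ₗ Kp) ∘ₗ η.symm.toLinearMap)) ∘ₗ Km.dualMap
      = (1/2 : ℝ) • ((Kp ∘ₗ Km - Km ∘ₗ Kp) ∘ₗ η.symm.toLinearMap) := by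
  have hKp : Kp * Kp = 1 := LinearMap.ext hKp2
  have hKm : Km * Km = 1 := LinearMap.ext hKm2
  simp only [← LinearMap.smul_comp, ← Module.End.mul_eq_comp]
  constructor
  · refine comp_comp_symm_comp_dualMap_eq_self η hKp2 hKpη ?_
    rw [mul_smul_comm, smul_mul_assoc, mul_sub_mul_comm_mul_self_left hKp, smul_neg]
  · refine comp_comp_symm_comp_dualMap_eq_self η hKm2 hKmη ?_
    rw [mul_smul_comm, smul_mul_assoc, mul_sub_mul_comm_mul_self_right Kp hKm, smul_neg]

/-- the bivector `Q = (1/2)[Kp,Km]η⁻¹` of a bi-para-Hermitian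
pair satisfies `K± ∘ Q ∘ K±* = Q`, i.e. `Q` is of type `(2,0)+(0,2)` with
respect to both `Kp` and `Km`. -/
theorem stmt13 {V : Type*} [AddCommGroup V] [Module ℝ V] [FiniteDimensional ℝ V]
    (η : V ≃ₗ[ℝ] Module.Dual ℝ V)
    (hsymm : ∀ x y, η x y = η y x)
    (Kp Km : Module.End ℝ V)
    (hKp2 : ∀ x, Kp (Kp x) = x) (hKm2 : ∀ x, Km (Km x) = x)
    (hKpη : ∀ x y, η (Kp x) (Kp y) = - η x y)
    (hKmη : ∀ x y, η (Km x) (Km y) = - η x y) :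
    Kp ∘ₗ ((1/2 : ℝ) • ((Kp ∘ₗ Km - Km ∘ₗ Kp) ∘ₗ η.symm.toLinearMap)) ∘ₗ Kp.dualMap
      = (1/2 : ℝ) • ((Kp ∘ₗ Km - Km ∘ₗ Kp) ∘ₗ η.symm.toLinearMap) ∧
    Km ∘ₗ ((1/2 : ℝ) • ((Kp ∘ₗ Km - Km ∘ₗ Kp) ∘ₗ η.symm.toLinearMap)) ∘ₗ Km.dualMap
      = (1/2 : ℝ) • ((Kp ∘ₗ Km - Km ∘ₗ Kp) ∘ₗ η.symm.toLinearMap) :=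
  stmt13_general η Kp Km hKp2 hKm2 hKpη hKmη
end
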